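/- arXiv:2406.12857 — 4 statements merged into one kernel-verified Lean document; each statement's English description precedes it below -/
import Mathlib

section
/- Let n ≥ 1 and let K and K̃ be n×n matrices with nonnegative real entries. The following are equivalent: (i) R_e[K](η) = R_e[K̃](η) for all η ∈ ℝ₊ⁿ; (ii) R_e[K](η) = R_e[K̃](η) for all η ∈ {0,1}ⁿ; (iii) spec[K](η) = spec[K̃](η) for all η ∈ ℝ₊ⁿ; (iv) spec[K](η) = spec[K̃](η) for all η ∈ {0,1}ⁿ; (v) for every nonempty α ⊆ {1,…,n}, det K[α] = det K̃[α]. -/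
open Matrix

/-- Spectral radius of a real square matrix: the maximum of the moduli of its
complex eigenvalues. -/
noncomputable def specRad {ι : Type*} [Fintype ι] [DecidableEq ι]
    (M : Matrix ι ι ℝ) : ℝ :=
  sSup ((fun z : ℂ => ‖z‖) '' spectrum ℂ (M.map (Complex.ofReal : ℝ → ℂ)))

/-- Effective spectrum: spectrum of `K ⬝ Diag η` over `ℂ`. -/
noncomputable def espec {ι : Type*} [Fintype ι] [DecidableEq ι]
    (K : Matrix ι ι ℝ) (η : ι → ℝ) : Set ℂ :=
  spectrum ℂ ((K * Matrix.diagonal η).map (Complex.ofReal : ℝ → ℂ))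

/-- Effective spectral radius: spectral radius of `K ⬝ Diag η`. -/
noncomputable def eRad {ι : Type*} [Fintype ι] [DecidableEq ι]
    (K : Matrix ι ι ℝ) (η : ι → ℝ) : ℝ :=
  specRad (K * Matrix.diagonal η)

/-- Principal minor of `K` associated to the set of indices `α`. -/
def pminor {n : ℕ} (K : Matrix (Fin n) (Fin n) ℝ) (α : Finset (Fin n)) : ℝ :=
  (K.submatrix (fun i : α => (i : Fin n)) (fun j : α => (j : Fin n))).det



section Expand
variable {R : Type*} [CommRing R] {ι : Type*} [Fintype ι] [DecidableEq ι]

/-- If all rows outside `s` agree with `x • 1`, the determinant factors. -/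
lemma det_rows_smul_one (s : Finset ι) (M : Matrix ι ι R) (x : R)
    (h : ∀ i ∉ s, M i = x • (1 : Matrix ι ι R) i) :
    M.det = x ^ (Fintype.card ι - s.card) *
      (M.submatrix (fun i : s => (i : ι)) (fun j : s => (j : ι))).det := by
  classical
  let e : {i // i ∈ s} ⊕ {i // ¬ i ∈ s} ≃ ι := Equiv.sumCompl (· ∈ s)
  have hM : M.submatrix e e = Matrix.fromBlocks
      (M.submatrix (fun i : s => (i : ι)) (fun j : s => (j : ι)))
      (M.submatrix (fun i : s => (i : ι)) (fun j : {i // ¬ i ∈ s} => (j : ι)))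
      0 (x • (1 : Matrix {i // ¬ i ∈ s} {i // ¬ i ∈ s} R)) := by
    ext i j
    rcases i with i | i <;> rcases j with j | j <;>
      simp only [Matrix.submatrix_apply, Matrix.fromBlocks_apply₁₁,
        Matrix.fromBlocks_apply₁₂, Matrix.fromBlocks_apply₂₁, Matrix.fromBlocks_apply₂₂,
        Equiv.sumCompl_apply_inl, Equiv.sumCompl_apply_inr, e]
    · have := h i i.2
      have hij : (i : ι) ≠ (j : ι) := fun hc => i.2 (hc ▸ j.2)
      rw [this]
      simp [Matrix.one_apply, hij]
    · have := h i i.2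
      rw [this]
      simp only [Matrix.smul_apply, Matrix.one_apply, Matrix.zero_apply, smul_eq_mul]
      by_cases hij : (i : ι) = (j : ι)
      · simp [Matrix.one_apply, hij, Subtype.ext hij]
      · have h2 : i ≠ j := fun hc => hij (congrArg Subtype.val hc)
        simp [Matrix.one_apply, hij, h2]
  have hdet := Matrix.det_submatrix_equiv_self e M
  rw [hM] at hdet
  rw [← hdet, Matrix.det_fromBlocks_zero₂₁, Matrix.det_smul, Matrix.det_one, mul_one]
  have hcard : Fintype.card {i // ¬ i ∈ s} = Fintype.card ι - s.card := by
    rw [Fintype.card_subtype_compl]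
    congr 1
    exact Fintype.card_coe s
  rw [hcard, mul_comm]

/-- Expansion of `det (x • 1 - M)` over principal minors. -/
lemma det_smul_one_sub_expand (M : Matrix ι ι R) (x : R) :
    (x • (1 : Matrix ι ι R) - M).det =
      ∑ s : Finset ι, (-1 : R) ^ s.card * x ^ (Fintype.card ι - s.card) *
        (M.submatrix (fun i : s => (i : ι)) (fun j : s => (j : ι))).det := by
  classical
  let f := (Matrix.detRowAlternating : (ι → R) [⋀^ι]→ₗ[R] R).toMultilinearMap
  have hdet : ∀ N : Matrix ι ι R, N.det = f (fun i => N i) := fun N => rfl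
  have h0 : (fun i => (x • (1 : Matrix ι ι R) - M) i) =
      (fun i => (-M) i) + (fun i => (x • (1 : Matrix ι ι R)) i) := by
    funext i j
    simp [Matrix.sub_apply, Matrix.neg_apply, Matrix.smul_apply]
    ring
  rw [hdet, h0, MultilinearMap.map_add_univ]
  refine Finset.sum_congr rfl fun s _ => ?_
  -- rewrite the piecewise row family as c i • N i
  set N : Matrix ι ι R := Matrix.of fun i => if i ∈ s then M i else (1 : Matrix ι ι R) i with hN
  have hpw : s.piecewise (fun i => (-M) i) (fun i => (x • (1 : Matrix ι ι R)) i) =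
      fun i => (if i ∈ s then (-1 : R) else x) • N i := by
    funext i j
    by_cases hi : i ∈ s <;>
      simp [Finset.piecewise, hi, hN, Matrix.neg_apply, Matrix.smul_apply, Pi.smul_apply]
  have hsm := f.map_smul_univ (fun i => if i ∈ s then (-1 : R) else x) (fun i => N i)
  rw [hpw, hsm]
  have hprod : (∏ i, (if i ∈ s then (-1 : R) else x)) =
      (-1 : R) ^ s.card * x ^ (Fintype.card ι - s.card) := by
    rw [Finset.prod_ite, Finset.prod_const, Finset.prod_const]
    congr 2
    · congr 1; ext i; simp
    · rw [Finset.filter_not]; rw [Finset.filter_univ_mem]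
      exact Finset.card_compl s ▸ rfl
  have hNdet : f (fun i => N i) = (N.submatrix (fun i : s => (i : ι)) (fun j : s => (j : ι))).det := by
    rw [← hdet]
    have := det_rows_smul_one s N 1 (fun i hi => by funext j; simp [hN, hi])
    simpa using this
  have hsub : N.submatrix (fun i : s => (i : ι)) (fun j : s => (j : ι)) =
      M.submatrix (fun i : s => (i : ι)) (fun j : s => (j : ι)) := by
    ext i j
    simp [hN, i.2]
  rw [hNdet, hsub, hprod, smul_eq_mul]

end Expand
section Spec
variable {ι : Type*} [Fintype ι] [DecidableEq ι]

lemma spectrum_matrix_eq {𝕜 : Type*} [Field 𝕜] (M : Matrix ι ι 𝕜) :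
    spectrum 𝕜 M = {μ | (μ • (1 : Matrix ι ι 𝕜) - M).det = 0} := by
  ext μ
  rw [spectrum.mem_iff, Set.mem_setOf_eq, Algebra.algebraMap_eq_smul_one,
    Matrix.isUnit_iff_isUnit_det, isUnit_iff_ne_zero, not_ne_iff]

lemma eval_charpoly'' {R : Type*} [CommRing R] (M : Matrix ι ι R) (x : R) :
    M.charpoly.eval x = (x • (1 : Matrix ι ι R) - M).det := by
  rw [Matrix.charpoly, ← Polynomial.coe_evalRingHom, RingHom.map_det]
  congr 1
  ext i j
  by_cases h : i = j
  · subst h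
    simp [Matrix.charmatrix_apply_eq, Matrix.one_apply, Matrix.sub_apply, Matrix.smul_apply]
  · simp [Matrix.charmatrix_apply_ne _ _ _ h, Matrix.one_apply, h, Matrix.sub_apply,
      Matrix.smul_apply]

lemma spectrum_matrix_finite (M : Matrix ι ι ℂ) : (spectrum ℂ M).Finite := by
  rw [spectrum_matrix_eq]
  have h : {μ : ℂ | (μ • (1 : Matrix ι ι ℂ) - M).det = 0} =
      {μ : ℂ | M.charpoly.IsRoot μ} := by
    ext μ; simp [Polynomial.IsRoot, eval_charpoly'']
  rw [h]
  exact Polynomial.finite_setOf_isRoot (M.charpoly_monic.ne_zero)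

lemma spectrum_matrix_nonempty [Nonempty ι] (M : Matrix ι ι ℂ) : (spectrum ℂ M).Nonempty := by
  rw [spectrum_matrix_eq]
  have hnd : 0 < M.charpoly.natDegree := by
    rw [Matrix.charpoly_natDegree_eq_dim]; exact Fintype.card_pos
  have hdeg : 0 < M.charpoly.degree := Polynomial.natDegree_pos_iff_degree_pos.mp hnd
  obtain ⟨z, hz⟩ := Complex.exists_root hdeg
  exact ⟨z, by simpa [Polynomial.IsRoot, eval_charpoly''] using hz⟩

lemma specRad_mem [Nonempty ι] (A : Matrix ι ι ℝ) :
    specRad A ∈ (fun z : ℂ => ‖z‖) '' spectrum ℂ (A.map (Complex.ofReal : ℝ → ℂ)) :=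
  Set.Nonempty.csSup_mem ((spectrum_matrix_nonempty _).image _)
    ((spectrum_matrix_finite _).image _)

lemma abs_le_specRad (A : Matrix ι ι ℝ) {μ : ℂ}
    (hμ : μ ∈ spectrum ℂ (A.map (Complex.ofReal : ℝ → ℂ))) : ‖μ‖ ≤ specRad A :=
  le_csSup ((spectrum_matrix_finite _).image _).bddAbove ⟨μ, hμ, rfl⟩

lemma specRad_nonneg [Nonempty ι] (A : Matrix ι ι ℝ) : 0 ≤ specRad A := by
  obtain ⟨μ, _, h⟩ := specRad_mem A
  exact h ▸ norm_nonneg μ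

end Spec

section Gelfand
variable {ι : Type*} [Fintype ι] [DecidableEq ι]

attribute [local instance] Matrix.linftyOpNormedAddCommGroup Matrix.linftyOpNormedRing
  Matrix.linftyOpNormedAlgebra

noncomputable local instance : CompleteSpace (Matrix ι ι ℂ) :=
  FiniteDimensional.complete ℂ _

set_option maxHeartbeats 1000000 in
lemma linfty_entry_le (M : Matrix ι ι ℂ) (i j : ι) : ‖M i j‖ ≤ ‖M‖ := by
  have h : ‖M i j‖₊ ≤ ‖M‖₊ := by
    rw [Matrix.linfty_opNNNorm_def]
    calc ‖M i j‖₊ ≤ ∑ j', ‖M i j'‖₊ :=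
          Finset.single_le_sum (f := fun j' => ‖M i j'‖₊) (fun _ _ => zero_le)
            (Finset.mem_univ j)
    _ ≤ _ := Finset.le_sup (f := fun i => ∑ j', ‖M i j'‖₊) (Finset.mem_univ i)
  exact_mod_cast h

set_option maxHeartbeats 1000000 in
lemma pow_entry_div_tendsto [Nonempty ι] (A : Matrix ι ι ℝ) {t : ℝ} (ht : specRad A < t)
    (i j : ι) :
    Filter.Tendsto (fun N : ℕ => (A ^ N) i j / t ^ N) Filter.atTop (nhds 0) := by
  set r := specRad A with hr
  have hr0 : 0 ≤ r := specRad_nonneg A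
  set s := (r + t) / 2 with hs
  have hrs : r < s := by rw [hs]; linarith
  have hst : s < t := by rw [hs]; linarith
  have hs0 : 0 < s := lt_of_le_of_lt hr0 hrs
  have ht0 : 0 < t := lt_trans hs0 hst
  set Mc := A.map (Complex.ofReal : ℝ → ℂ) with hMc
  have hsr : spectralRadius ℂ Mc ≤ ENNReal.ofReal r := by
    refine iSup₂_le fun μ hμ => ?_
    rw [← ENNReal.ofReal_coe_nnreal, coe_nnnorm]
    exact ENNReal.ofReal_le_ofReal (by simpa using abs_le_specRad A hμ)
  have hlt : spectralRadius ℂ Mc < ENNReal.ofReal s :=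
    lt_of_le_of_lt hsr (by rw [ENNReal.ofReal_lt_ofReal_iff hs0]; exact hrs)
  have hg := spectrum.pow_nnnorm_pow_one_div_tendsto_nhds_spectralRadius Mc
  have hev : ∀ᶠ N : ℕ in Filter.atTop,
      ((‖Mc ^ N‖₊ : ENNReal) ^ (1 / (N : ℝ))) < ENNReal.ofReal s :=
    hg.eventually_lt_const hlt
  have hev2 : ∀ᶠ N : ℕ in Filter.atTop, |(A ^ N) i j| ≤ s ^ N := by
    filter_upwards [hev, Filter.eventually_ge_atTop 1] with N hN hN1
    have hN0 : (N : ℝ) ≠ 0 := by positivity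
    have h1 : ((‖Mc ^ N‖₊ : ENNReal)) ≤ ENNReal.ofReal (s ^ N) := by
      have h2 : ((‖Mc ^ N‖₊ : ENNReal) ^ (1 / (N : ℝ))) ^ (N : ℝ) ≤
          (ENNReal.ofReal s) ^ (N : ℝ) := ENNReal.rpow_le_rpow hN.le (by positivity)
      rwa [← ENNReal.rpow_mul, one_div_mul_cancel hN0, ENNReal.rpow_one,
        ENNReal.ofReal_rpow_of_pos hs0, Real.rpow_natCast] at h2
    rw [← ENNReal.ofReal_coe_nnreal, coe_nnnorm, ENNReal.ofReal_le_ofReal_iff (by positivity)] at h1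
    have hmap : Mc ^ N = (A ^ N).map (Complex.ofReal : ℝ → ℂ) := by
      have := map_pow (Complex.ofRealHom.mapMatrix :
        Matrix ι ι ℝ →+* Matrix ι ι ℂ) A N
      simpa [RingHom.mapMatrix_apply, Complex.ofRealHom] using this.symm
    have hentry : |(A ^ N) i j| = ‖(Mc ^ N) i j‖ := by
      rw [hmap]; simp [Matrix.map_apply]
    exact le_trans (hentry ▸ linfty_entry_le (Mc ^ N) i j) h1
  have hbound : ∀ᶠ N : ℕ in Filter.atTop, ‖(A ^ N) i j / t ^ N‖ ≤ (s / t) ^ N := by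
    filter_upwards [hev2] with N hN
    rw [Real.norm_eq_abs, abs_div, abs_pow, abs_of_pos ht0, div_pow]
    gcongr
  exact squeeze_zero_norm' hbound
    (tendsto_pow_atTop_nhds_zero_of_lt_one (by positivity) ((div_lt_one ht0).mpr hst))

section PF
variable {ι : Type*} [Fintype ι] [DecidableEq ι]

lemma pow_entry_nonneg {A : Matrix ι ι ℝ} (hA : ∀ i j, 0 ≤ A i j) (N : ℕ) :
    ∀ i j, 0 ≤ (A ^ N) i j := by
  induction N with
  | zero =>
    intro i j
    rw [pow_zero]
    by_cases h : i = j <;> simp [Matrix.one_apply, h]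
  | succ N ih =>
    intro i j
    rw [pow_succ, Matrix.mul_apply]
    exact Finset.sum_nonneg fun l _ => mul_nonneg (ih i l) (hA l j)

set_option maxHeartbeats 1000000 in
theorem perron_root [Nonempty ι] (A : Matrix ι ι ℝ) (hA : ∀ i j, 0 ≤ A i j) :
    ((specRad A) • (1 : Matrix ι ι ℝ) - A).det = 0 := by
  by_contra hdet
  set r := specRad A with hrdef
  have hr0 : 0 ≤ r := specRad_nonneg A
  set Mc := A.map (Complex.ofReal : ℝ → ℂ) with hMc
  obtain ⟨μ, hμmem, hμabs⟩ := specRad_mem A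
  have hμdet : (μ • (1 : Matrix ι ι ℂ) - Mc).det = 0 := by
    have h := hμmem
    rw [spectrum_matrix_eq] at h
    exact h
  obtain ⟨v, hv0, hveq⟩ := (Matrix.exists_mulVec_eq_zero_iff).mpr hμdet
  have hvec : ∀ i, (Mc *ᵥ v) i = μ * v i := by
    intro i
    have h1 := congrFun hveq i
    rw [Matrix.sub_mulVec, Matrix.smul_mulVec, Matrix.one_mulVec] at h1
    have h2 : (μ • v) i - (Mc *ᵥ v) i = 0 := h1
    rw [sub_eq_zero] at h2
    simpa [Pi.smul_apply, smul_eq_mul] using h2.symm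
  set x : ι → ℝ := fun i => ‖v i‖ with hx
  have hx0 : ∀ i, 0 ≤ x i := fun i => norm_nonneg _
  have hxne : ∃ i, 0 < x i := by
    by_contra hcon
    push_neg at hcon
    exact hv0 (funext fun i =>
      norm_eq_zero.mp (le_antisymm (hcon i) (hx0 i)))
  have hxineq : ∀ i, r * x i ≤ ∑ j, A i j * x j := by
    intro i
    have h1 : r * x i = ‖(Mc *ᵥ v) i‖ := by
      rw [hvec i, norm_mul, show ‖μ‖ = r from hμabs]
    have h2 : (Mc *ᵥ v) i = ∑ j, Mc i j * v j := by
      simp [Matrix.mulVec, dotProduct]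
    rw [h1, h2]
    calc ‖∑ j, Mc i j * v j‖ ≤ ∑ j, ‖Mc i j * v j‖ :=
          norm_sum_le _ _
    _ = ∑ j, A i j * x j := by
        refine Finset.sum_congr rfl fun j _ => ?_
        rw [norm_mul, hMc]
        simp [Matrix.map_apply, abs_of_nonneg (hA i j), hx]
  have hdetne : ∀ t : ℝ, r ≤ t → ((t • (1 : Matrix ι ι ℝ) - A)).det ≠ 0 := by
    intro t hrt h0
    rcases eq_or_lt_of_le hrt with heq | hlt
    · exact hdet (heq ▸ h0)
    · have hmap : ((t : ℂ) • (1 : Matrix ι ι ℂ) - Mc)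
          = ((t • (1 : Matrix ι ι ℝ) - A)).map (Complex.ofReal : ℝ → ℂ) := by
        ext i j
        by_cases h : i = j <;>
          simp [hMc, Matrix.map_apply, Matrix.sub_apply, Matrix.smul_apply, Matrix.one_apply, h]
      have hdc : ((t : ℂ) • (1 : Matrix ι ι ℂ) - Mc).det = 0 := by
        rw [hmap]
        have h3 := (RingHom.map_det (Complex.ofRealHom) (t • (1 : Matrix ι ι ℝ) - A)).symm
        rw [h0] at h3
        simpa [Complex.ofRealHom] using h3
      have hts : (t : ℂ) ∈ spectrum ℂ Mc := by
        rw [spectrum_matrix_eq]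
        exact hdc
      have habs := abs_le_specRad A hts
      rw [Complex.norm_real, Real.norm_eq_abs, abs_of_nonneg (le_trans hr0 hlt.le)] at habs
      exact absurd habs (not_le.mpr hlt)
  have hinv : ∀ t : ℝ, r ≤ t →
      (t • (1 : Matrix ι ι ℝ) - A) * (t • (1 : Matrix ι ι ℝ) - A)⁻¹ = 1 ∧
      (t • (1 : Matrix ι ι ℝ) - A)⁻¹ * (t • (1 : Matrix ι ι ℝ) - A) = 1 := fun t ht =>
    ⟨Matrix.mul_nonsing_inv _ (isUnit_iff_ne_zero.mpr (hdetne t ht)),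
     Matrix.nonsing_inv_mul _ (isUnit_iff_ne_zero.mpr (hdetne t ht))⟩
  have hBpos : ∀ t : ℝ, r < t → ∀ i j, 0 ≤ (t • (1 : Matrix ι ι ℝ) - A)⁻¹ i j := by
    intro t ht i j
    set B := (t • (1 : Matrix ι ι ℝ) - A)⁻¹ with hB
    have ht0 : 0 < t := lt_of_le_of_lt hr0 ht
    have hgeo : ∀ N : ℕ, (t • (1 : Matrix ι ι ℝ) - A) *
        (∑ k ∈ Finset.range N, (t⁻¹ ^ (k + 1)) • A ^ k) = 1 - (t⁻¹ ^ N) • A ^ N := by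
      intro N
      induction N with
      | zero => simp
      | succ N ih =>
        rw [Finset.sum_range_succ, mul_add, ih]
        have hstep : (t • (1 : Matrix ι ι ℝ) - A) * ((t⁻¹ ^ (N + 1)) • A ^ N)
            = (t⁻¹ ^ N) • A ^ N - (t⁻¹ ^ (N + 1)) • A ^ (N + 1) := by
          rw [mul_smul_comm, sub_mul, smul_mul_assoc, one_mul, ← pow_succ' A, smul_sub,
            smul_smul]
          congr 2
          rw [pow_succ, mul_assoc, inv_mul_cancel₀ ht0.ne', mul_one]
        rw [hstep]
        abel
    have hS : ∀ N : ℕ, (∑ k ∈ Finset.range N, (t⁻¹ ^ (k + 1)) • A ^ k)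
        = B - (t⁻¹ ^ N) • (B * A ^ N) := by
      intro N
      have h1 := congrArg (fun M => B * M) (hgeo N)
      rw [← mul_assoc, (hinv t ht.le).2, one_mul, mul_sub, mul_one, mul_smul_comm] at h1
      exact h1
    have hSnn : ∀ N : ℕ, 0 ≤ (∑ k ∈ Finset.range N, (t⁻¹ ^ (k + 1)) • A ^ k) i j := by
      intro N
      rw [Matrix.sum_apply]
      refine Finset.sum_nonneg fun k _ => ?_
      rw [Matrix.smul_apply, smul_eq_mul]
      exact mul_nonneg (pow_nonneg (inv_nonneg.mpr ht0.le) _) (pow_entry_nonneg hA k i j)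
    have htail : Filter.Tendsto (fun N : ℕ => (t⁻¹ ^ N) * (B * A ^ N) i j)
        Filter.atTop (nhds 0) := by
      have heq : ∀ N : ℕ, (t⁻¹ ^ N) * (B * A ^ N) i j
          = ∑ l, B i l * ((A ^ N) l j / t ^ N) := by
        intro N
        rw [Matrix.mul_apply, Finset.mul_sum]
        refine Finset.sum_congr rfl fun l _ => ?_
        rw [inv_pow]
        field_simp
      simp only [heq]
      have h4 := tendsto_finset_sum (Finset.univ : Finset ι)
        (fun l _ => ((pow_entry_div_tendsto A ht l j).const_mul (B i l)))
      simpa using h4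
    have hlim : Filter.Tendsto
        (fun N : ℕ => (∑ k ∈ Finset.range N, (t⁻¹ ^ (k + 1)) • A ^ k) i j)
        Filter.atTop (nhds (B i j)) := by
      have heq2 : ∀ N : ℕ, (∑ k ∈ Finset.range N, (t⁻¹ ^ (k + 1)) • A ^ k) i j
          = B i j - (t⁻¹ ^ N) * (B * A ^ N) i j := by
        intro N
        rw [hS N]
        simp [Matrix.sub_apply, Matrix.smul_apply]
      simp only [heq2]
      simpa using (tendsto_const_nhds.sub htail)
    exact ge_of_tendsto hlim (Filter.Eventually.of_forall hSnn)
  have hBr : ∀ i j, 0 ≤ (r • (1 : Matrix ι ι ℝ) - A)⁻¹ i j := by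
    intro i j
    have hc : Continuous fun t : ℝ => (t • (1 : Matrix ι ι ℝ) - A) :=
      (continuous_id.smul continuous_const).sub continuous_const
    have hcd : Continuous fun t : ℝ => (t • (1 : Matrix ι ι ℝ) - A).det := hc.matrix_det
    have hcadj : Continuous fun t : ℝ => (t • (1 : Matrix ι ι ℝ) - A).adjugate i j :=
      (continuous_apply j).comp ((continuous_apply i).comp hc.matrix_adjugate)
    have hentry : ∀ t : ℝ, (t • (1 : Matrix ι ι ℝ) - A)⁻¹ i j
        = ((t • (1 : Matrix ι ι ℝ) - A).det)⁻¹
          * (t • (1 : Matrix ι ι ℝ) - A).adjugate i j := by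
      intro t
      rw [Matrix.inv_def]
      simp only [Matrix.smul_apply, smul_eq_mul, Ring.inverse_eq_inv']
    have h1 : Filter.Tendsto (fun t : ℝ => ((t • (1 : Matrix ι ι ℝ) - A).det)⁻¹)
        (nhdsWithin r (Set.Ioi r)) (nhds (((r • (1 : Matrix ι ι ℝ) - A).det)⁻¹)) :=
      ((hcd.tendsto r).inv₀ (hdetne r le_rfl)).mono_left nhdsWithin_le_nhds
    have h2 : Filter.Tendsto (fun t : ℝ => (t • (1 : Matrix ι ι ℝ) - A).adjugate i j)
        (nhdsWithin r (Set.Ioi r)) (nhds ((r • (1 : Matrix ι ι ℝ) - A).adjugate i j)) :=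
      (hcadj.tendsto r).mono_left nhdsWithin_le_nhds
    have hth : Filter.Tendsto (fun t : ℝ => (t • (1 : Matrix ι ι ℝ) - A)⁻¹ i j)
        (nhdsWithin r (Set.Ioi r)) (nhds ((r • (1 : Matrix ι ι ℝ) - A)⁻¹ i j)) := by
      simp only [hentry]
      exact h1.mul h2
    exact ge_of_tendsto hth
      (Filter.eventually_of_mem self_mem_nhdsWithin fun t htmem => hBpos t htmem i j)
  obtain ⟨i0, hi0⟩ := hxne
  have hxle : ∀ i, x i ≤ 0 := by
    intro i
    have hxeq : x = (r • (1 : Matrix ι ι ℝ) - A)⁻¹ *ᵥ ((r • (1 : Matrix ι ι ℝ) - A) *ᵥ x) := by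
      rw [Matrix.mulVec_mulVec, (hinv r le_rfl).2, Matrix.one_mulVec]
    have hyneg : ∀ j, ((r • (1 : Matrix ι ι ℝ) - A) *ᵥ x) j ≤ 0 := by
      intro j
      have : ((r • (1 : Matrix ι ι ℝ) - A) *ᵥ x) j = r * x j - ∑ l, A j l * x l := by
        rw [Matrix.sub_mulVec, Matrix.smul_mulVec, Matrix.one_mulVec]
        simp [Matrix.mulVec, dotProduct]
      rw [this]
      exact sub_nonpos.mpr (hxineq j)
    calc x i = ∑ j, (r • (1 : Matrix ι ι ℝ) - A)⁻¹ i j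
        * ((r • (1 : Matrix ι ι ℝ) - A) *ᵥ x) j := by
          conv_lhs => rw [hxeq]
          simp [Matrix.mulVec, dotProduct]
    _ ≤ 0 := Finset.sum_nonpos fun j _ => mul_nonpos_of_nonneg_of_nonpos (hBr i j) (hyneg j)
  exact absurd (hxle i0) (not_le.mpr hi0)

end PF

section Glue
variable {n : ℕ}

lemma det_map_ofReal {κ : Type*} [Fintype κ] [DecidableEq κ] (N : Matrix κ κ ℝ) :
    (N.map (Complex.ofReal : ℝ → ℂ)).det = Complex.ofReal N.det := by
  have h := (RingHom.map_det Complex.ofRealHom N).symm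
  simpa [Complex.ofRealHom] using h

lemma submatrix_subtype_det {R : Type*} [CommRing R] {ι : Type*} [Fintype ι] [DecidableEq ι]
    (M : Matrix ι ι R) (α : Finset ι) (s : Finset {i // i ∈ α}) :
    ((M.submatrix (fun i : α => (i : ι)) (fun j : α => (j : ι))).submatrix
        (fun i : s => (i : {i // i ∈ α})) (fun j : s => (j : {i // i ∈ α}))).det
      = (M.submatrix
          (fun i : (s.map (Function.Embedding.subtype (· ∈ α))) => (i : ι))
          (fun j : (s.map (Function.Embedding.subtype (· ∈ α))) => (j : ι))).det := by
  rw [Matrix.submatrix_submatrix]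
  have hf : Function.Bijective (fun x : {j // j ∈ s} =>
      (⟨((x : {i // i ∈ α}) : ι), Finset.mem_map.mpr ⟨(x : {i // i ∈ α}), x.2, rfl⟩⟩ :
        {j // j ∈ s.map (Function.Embedding.subtype (· ∈ α))})) := by
    constructor
    · intro a b hab
      have h2 := congrArg Subtype.val hab
      simp only at h2
      exact Subtype.ext (Subtype.ext h2)
    · rintro ⟨y, hy⟩
      obtain ⟨a, ha, hav⟩ := Finset.mem_map.mp hy
      exact ⟨⟨a, ha⟩, Subtype.ext hav⟩
  rw [← Matrix.det_submatrix_equiv_self (Equiv.ofBijective _ hf)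
    (M.submatrix (fun i : (s.map (Function.Embedding.subtype (· ∈ α))) => (i : ι))
      (fun j : (s.map (Function.Embedding.subtype (· ∈ α))) => (j : ι))),
    Matrix.submatrix_submatrix]
  rfl

lemma pminor_submatrix_mul_diagonal (K : Matrix (Fin n) (Fin n) ℝ) (η : Fin n → ℝ)
    (s : Finset (Fin n)) :
    (((K * Matrix.diagonal η).map (Complex.ofReal : ℝ → ℂ)).submatrix
        (fun i : s => (i : Fin n)) (fun j : s => (j : Fin n))).det
      = (∏ i ∈ s, (η i : ℂ)) * Complex.ofReal (pminor K s) := by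
  have hsub : ((K * Matrix.diagonal η).map (Complex.ofReal : ℝ → ℂ)).submatrix
        (fun i : s => (i : Fin n)) (fun j : s => (j : Fin n))
      = ((K.submatrix (fun i : s => (i : Fin n)) (fun j : s => (j : Fin n))).map
          (Complex.ofReal : ℝ → ℂ))
        * Matrix.diagonal (fun j : s => (η (j : Fin n) : ℂ)) := by
    ext i j
    simp [Matrix.mul_diagonal, Matrix.submatrix_apply, Matrix.map_apply]
  rw [hsub, Matrix.det_mul, Matrix.det_diagonal, det_map_ofReal, pminor,
    Finset.prod_coe_sort s (fun i => (η i : ℂ))]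
  ring

lemma det_mu_expand (K : Matrix (Fin n) (Fin n) ℝ) (η : Fin n → ℝ) (μ : ℂ) :
    (μ • (1 : Matrix (Fin n) (Fin n) ℂ) - (K * Matrix.diagonal η).map
        (Complex.ofReal : ℝ → ℂ)).det
      = ∑ s : Finset (Fin n), (-1 : ℂ) ^ s.card * μ ^ (n - s.card) *
          ((∏ i ∈ s, (η i : ℂ)) * Complex.ofReal (pminor K s)) := by
  rw [det_smul_one_sub_expand]
  refine Finset.sum_congr rfl fun s _ => ?_
  rw [pminor_submatrix_mul_diagonal, Fintype.card_fin]

lemma espec_eq_detRoots (K : Matrix (Fin n) (Fin n) ℝ) (η : Fin n → ℝ) :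
    espec K η = {μ : ℂ | (μ • (1 : Matrix (Fin n) (Fin n) ℂ) -
      (K * Matrix.diagonal η).map (Complex.ofReal : ℝ → ℂ)).det = 0} :=
  spectrum_matrix_eq _

lemma pminor_eq_of_minors {K Kt : Matrix (Fin n) (Fin n) ℝ}
    (h5 : ∀ α : Finset (Fin n), α.Nonempty → pminor K α = pminor Kt α) :
    ∀ s : Finset (Fin n), pminor K s = pminor Kt s := by
  intro s
  rcases s.eq_empty_or_nonempty with rfl | hs
  · haveI : IsEmpty {x // x ∈ (∅ : Finset (Fin n))} :=
      ⟨fun x => (Finset.notMem_empty _ x.2)⟩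
    rw [pminor, pminor, Matrix.det_isEmpty, Matrix.det_isEmpty]
  · exact h5 s hs

lemma espec_eq_of_minors {K Kt : Matrix (Fin n) (Fin n) ℝ}
    (h5 : ∀ α : Finset (Fin n), α.Nonempty → pminor K α = pminor Kt α) (η : Fin n → ℝ) :
    espec K η = espec Kt η := by
  rw [espec_eq_detRoots, espec_eq_detRoots]
  ext μ
  simp only [Set.mem_setOf_eq, det_mu_expand]
  rw [Finset.sum_congr rfl fun s _ => by rw [pminor_eq_of_minors h5 s]]

lemma det_mu_indicator (K : Matrix (Fin n) (Fin n) ℝ) (α : Finset (Fin n)) (μ : ℂ) :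
    (μ • (1 : Matrix (Fin n) (Fin n) ℂ) -
        (K * Matrix.diagonal (fun i => if i ∈ α then (1:ℝ) else 0)).map
          (Complex.ofReal : ℝ → ℂ)).det
      = μ ^ (n - α.card) *
        (μ • (1 : Matrix {i // i ∈ α} {i // i ∈ α} ℂ) -
          (K.submatrix (fun i : α => (i : Fin n)) (fun j : α => (j : Fin n))).map
            (Complex.ofReal : ℝ → ℂ)).det := by
  rw [det_mu_expand]
  have hprod : ∀ s : Finset (Fin n),
      (∏ i ∈ s, (((if i ∈ α then (1:ℝ) else 0) : ℝ) : ℂ)) = if s ⊆ α then 1 else 0 := by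
    intro s
    have h1 : ∀ i, (((if i ∈ α then (1:ℝ) else 0) : ℝ) : ℂ) = if i ∈ α then (1:ℂ) else 0 := by
      intro i; split <;> simp
    rw [Finset.prod_congr rfl fun i _ => h1 i, Finset.prod_boole]
    by_cases h : s ⊆ α
    · rw [if_pos (fun x hx => h hx), if_pos h]
    · rw [if_neg (fun hc => h fun x hx => hc x hx), if_neg h]
  have hstep : ∀ s : Finset (Fin n), (-1 : ℂ) ^ s.card * μ ^ (n - s.card) *
      ((∏ i ∈ s, (((if i ∈ α then (1:ℝ) else 0) : ℝ) : ℂ)) * Complex.ofReal (pminor K s))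
      = if s ⊆ α then (-1 : ℂ) ^ s.card * μ ^ (n - s.card) * Complex.ofReal (pminor K s)
        else 0 := by
    intro s
    rw [hprod s]
    split_ifs <;> ring
  rw [Finset.sum_congr rfl fun s _ => hstep s, ← Finset.sum_filter]
  have hfil : Finset.univ.filter (· ⊆ α) = α.powerset := by
    ext t; simp [Finset.mem_powerset]
  rw [hfil, det_smul_one_sub_expand, Finset.mul_sum]
  refine (Finset.sum_bij' (fun (s' : Finset {i // i ∈ α}) _ =>
      s'.map (Function.Embedding.subtype (· ∈ α)))
    (fun t _ => t.subtype (· ∈ α)) ?_ ?_ ?_ ?_ ?_).symm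
  · intro s' _
    rw [Finset.mem_powerset]
    intro y hy
    obtain ⟨a, _, rfl⟩ := Finset.mem_map.mp hy
    exact a.2
  · intro t _; exact Finset.mem_univ _
  · intro s' _
    ext a
    rw [Finset.mem_subtype, Finset.mem_map]
    constructor
    · rintro ⟨b, hb, hba⟩
      rwa [show b = a from Subtype.ext hba] at hb
    · intro ha
      exact ⟨a, ha, rfl⟩
  · intro t ht
    ext y
    simp only [Finset.mem_map, Finset.mem_subtype, Function.Embedding.coe_subtype]
    constructor
    · rintro ⟨a, ha, rfl⟩
      exact ha
    · intro hy
      exact ⟨⟨y, Finset.mem_powerset.mp ht hy⟩, hy, rfl⟩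
  · intro s' _
    have hcard1 : (s'.map (Function.Embedding.subtype (· ∈ α))).card = s'.card :=
      Finset.card_map _
    have hcard2 : s'.card ≤ α.card := by
      have := Finset.card_le_univ s'
      rwa [Fintype.card_coe] at this
    have hcard3 : α.card ≤ n := by
      have := Finset.card_le_univ α
      rwa [Fintype.card_fin] at this
    have hsubdet : (((K.submatrix (fun i : α => (i : Fin n)) (fun j : α => (j : Fin n))).map
          (Complex.ofReal : ℝ → ℂ)).submatrix
          (fun i : s' => (i : {i // i ∈ α})) (fun j : s' => (j : {i // i ∈ α}))).det
        = Complex.ofReal (pminor K (s'.map (Function.Embedding.subtype (· ∈ α)))) := by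
      have hmapsub : ((K.submatrix (fun i : α => (i : Fin n)) (fun j : α => (j : Fin n))).map
            (Complex.ofReal : ℝ → ℂ)).submatrix
            (fun i : s' => (i : {i // i ∈ α})) (fun j : s' => (j : {i // i ∈ α}))
          = ((K.submatrix (fun i : α => (i : Fin n)) (fun j : α => (j : Fin n))).submatrix
            (fun i : s' => (i : {i // i ∈ α})) (fun j : s' => (j : {i // i ∈ α}))).map
            (Complex.ofReal : ℝ → ℂ) := rfl
      rw [hmapsub, det_map_ofReal, submatrix_subtype_det]
      rfl
    rw [hsubdet, hcard1, Fintype.card_coe]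
    rw [show n - s'.card = (n - α.card) + (α.card - s'.card) by omega, pow_add]
    ring

lemma eRad_indicator (K : Matrix (Fin n) (Fin n) ℝ) (α : Finset (Fin n)) (hα : α.Nonempty) :
    eRad K (fun i => if i ∈ α then (1:ℝ) else 0)
      = specRad (K.submatrix (fun i : α => (i : Fin n)) (fun j : α => (j : Fin n))) := by
  haveI : Nonempty {i // i ∈ α} := ⟨⟨hα.choose, hα.choose_spec⟩⟩
  haveI : Nonempty (Fin n) := ⟨hα.choose⟩
  have hS : spectrum ℂ ((K.submatrix (fun i : α => (i : Fin n))
        (fun j : α => (j : Fin n))).map (Complex.ofReal : ℝ → ℂ))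
      = {μ : ℂ | (μ • 1 - (K.submatrix (fun i : α => (i : Fin n))
          (fun j : α => (j : Fin n))).map (Complex.ofReal : ℝ → ℂ)).det = 0} :=
    spectrum_matrix_eq _
  have hT : spectrum ℂ ((K * Matrix.diagonal (fun i => if i ∈ α then (1:ℝ) else 0)).map
        (Complex.ofReal : ℝ → ℂ))
      = {μ : ℂ | μ ^ (n - α.card) * (μ • 1 - (K.submatrix (fun i : α => (i : Fin n))
          (fun j : α => (j : Fin n))).map (Complex.ofReal : ℝ → ℂ)).det = 0} := by
    rw [spectrum_matrix_eq]
    ext μ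
    simp only [Set.mem_setOf_eq, det_mu_indicator]
  have hTne : (spectrum ℂ ((K * Matrix.diagonal (fun i => if i ∈ α then (1:ℝ) else 0)).map
      (Complex.ofReal : ℝ → ℂ))).Nonempty := spectrum_matrix_nonempty _
  have h1 : eRad K (fun i => if i ∈ α then (1:ℝ) else 0)
      = sSup ((fun z : ℂ => ‖z‖) '' spectrum ℂ
        ((K * Matrix.diagonal (fun i => if i ∈ α then (1:ℝ) else 0)).map
          (Complex.ofReal : ℝ → ℂ))) := rfl
  rw [h1]
  apply le_antisymm
  · apply csSup_le (hTne.image _)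
    rintro a ⟨μ, hμ, rfl⟩
    rw [hT] at hμ
    rcases mul_eq_zero.mp hμ with h | h
    · obtain ⟨rfl, -⟩ := pow_eq_zero_iff'.mp h
      simpa using specRad_nonneg (K.submatrix (fun i : α => (i : Fin n))
        (fun j : α => (j : Fin n)))
    · exact abs_le_specRad _ (by rw [hS]; exact h)
  · obtain ⟨μ0, hμ0, hval⟩ := specRad_mem (K.submatrix (fun i : α => (i : Fin n))
      (fun j : α => (j : Fin n)))
    rw [← hval]
    apply le_csSup (((spectrum_matrix_finite _).image _).bddAbove)
    refine ⟨μ0, ?_, rfl⟩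
    rw [hT]
    exact mul_eq_zero.mpr (Or.inr (by rw [hS] at hμ0; exact hμ0))

end Glue

section Main
variable {n : ℕ}

lemma pminor_empty (K : Matrix (Fin n) (Fin n) ℝ) : pminor K ∅ = 1 := by
  haveI : IsEmpty {x // x ∈ (∅ : Finset (Fin n))} := ⟨fun x => (Finset.notMem_empty _ x.2)⟩
  rw [pminor, Matrix.det_isEmpty]

lemma submatrix_subtype_pminor (K : Matrix (Fin n) (Fin n) ℝ) (α : Finset (Fin n))
    (s : Finset {i // i ∈ α}) :
    ((K.submatrix (fun i : α => (i : Fin n)) (fun j : α => (j : Fin n))).submatrix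
        (fun i : s => (i : {i // i ∈ α})) (fun j : s => (j : {i // i ∈ α}))).det
      = pminor K (s.map (Function.Embedding.subtype (· ∈ α))) :=
  submatrix_subtype_det K α s

lemma minors_eq_of_eRad (K Kt : Matrix (Fin n) (Fin n) ℝ)
    (hK : ∀ i j, 0 ≤ K i j) (hKt : ∀ i j, 0 ≤ Kt i j)
    (h2 : ∀ η : Fin n → ℝ, (∀ i, η i = 0 ∨ η i = 1) → eRad K η = eRad Kt η) :
    ∀ α : Finset (Fin n), α.Nonempty → pminor K α = pminor Kt α := by
  intro α
  induction α using Finset.strongInduction with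
  | _ α IH =>
    intro hα
    haveI : Nonempty {i // i ∈ α} := ⟨⟨hα.choose, hα.choose_spec⟩⟩
    have hind : ∀ i : Fin n,
        (if i ∈ α then (1:ℝ) else 0) = 0 ∨ (if i ∈ α then (1:ℝ) else 0) = 1 := by
      intro i; by_cases h : i ∈ α <;> simp [h]
    have hr : specRad (Kt.submatrix (fun i : α => (i : Fin n)) (fun j : α => (j : Fin n)))
        = specRad (K.submatrix (fun i : α => (i : Fin n)) (fun j : α => (j : Fin n))) := by
      rw [← eRad_indicator K α hα, ← eRad_indicator Kt α hα, h2 _ hind]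
    set r := specRad (K.submatrix (fun i : α => (i : Fin n)) (fun j : α => (j : Fin n)))
      with hrdef
    have hdA : (r • (1 : Matrix {i // i ∈ α} {i // i ∈ α} ℝ)
        - K.submatrix (fun i : α => (i : Fin n)) (fun j : α => (j : Fin n))).det = 0 :=
      perron_root _ (fun i j => hK _ _)
    have hdB : (r • (1 : Matrix {i // i ∈ α} {i // i ∈ α} ℝ)
        - Kt.submatrix (fun i : α => (i : Fin n)) (fun j : α => (j : Fin n))).det = 0 := by
      rw [← hr]
      exact perron_root _ (fun i j => hKt _ _)
    rw [det_smul_one_sub_expand] at hdA hdB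
    simp only [submatrix_subtype_pminor] at hdA hdB
    have hsum := hdA.trans hdB.symm
    have hKsum := Finset.add_sum_erase Finset.univ
      (fun s : Finset {i // i ∈ α} => (-1:ℝ) ^ s.card *
        r ^ (Fintype.card {i // i ∈ α} - s.card) *
        pminor K (s.map (Function.Embedding.subtype (· ∈ α))))
      (Finset.mem_univ (Finset.univ : Finset {i // i ∈ α}))
    have hKtsum := Finset.add_sum_erase Finset.univ
      (fun s : Finset {i // i ∈ α} => (-1:ℝ) ^ s.card *
        r ^ (Fintype.card {i // i ∈ α} - s.card) *
        pminor Kt (s.map (Function.Embedding.subtype (· ∈ α))))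
      (Finset.mem_univ (Finset.univ : Finset {i // i ∈ α}))
    rw [← hKsum, ← hKtsum] at hsum
    simp only at hsum
    have herase : (∑ s ∈ Finset.univ.erase (Finset.univ : Finset {i // i ∈ α}),
          (-1:ℝ) ^ s.card * r ^ (Fintype.card {i // i ∈ α} - s.card) *
            pminor K (s.map (Function.Embedding.subtype (· ∈ α))))
        = ∑ s ∈ Finset.univ.erase (Finset.univ : Finset {i // i ∈ α}),
          (-1:ℝ) ^ s.card * r ^ (Fintype.card {i // i ∈ α} - s.card) *
            pminor Kt (s.map (Function.Embedding.subtype (· ∈ α))) := by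
      refine Finset.sum_congr rfl fun s hs => ?_
      have hne : s ≠ Finset.univ := (Finset.mem_erase.mp hs).1
      have hsub : s.map (Function.Embedding.subtype (· ∈ α)) ⊆ α := by
        intro y hy
        obtain ⟨a, _, rfl⟩ := Finset.mem_map.mp hy
        exact a.2
      have hcard : (s.map (Function.Embedding.subtype (· ∈ α))).card < α.card := by
        rw [Finset.card_map]
        have h1 : s ⊂ Finset.univ := Finset.ssubset_univ_iff.mpr hne
        have h2 := Finset.card_lt_card h1
        rwa [Finset.card_univ, Fintype.card_coe] at h2
      have hss : s.map (Function.Embedding.subtype (· ∈ α)) ⊂ α := by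
        refine Finset.ssubset_iff_subset_ne.mpr ⟨hsub, ?_⟩
        intro hcon
        rw [hcon] at hcard
        exact lt_irrefl _ hcard
      have hpm : pminor K (s.map (Function.Embedding.subtype (· ∈ α)))
          = pminor Kt (s.map (Function.Embedding.subtype (· ∈ α))) := by
        rcases (s.map (Function.Embedding.subtype (· ∈ α))).eq_empty_or_nonempty with
          hemp | hne2
        · rw [hemp, pminor_empty, pminor_empty]
        · exact IH _ hss hne2
      rw [hpm]
    rw [herase] at hsum
    have hcancel := add_right_cancel hsum
    have huniv : (Finset.univ : Finset {i // i ∈ α}).map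
        (Function.Embedding.subtype (· ∈ α)) = α := by
      rw [Finset.univ_eq_attach, Finset.attach_map_val]
    rw [huniv] at hcancel
    rw [Finset.card_univ, Nat.sub_self, pow_zero, mul_one] at hcancel
    exact mul_left_cancel₀ (pow_ne_zero _ (neg_ne_zero.mpr one_ne_zero)) hcancel

end Main

theorem effective_spectrum_principal_minors_tfae
    {n : ℕ} (hn : 1 ≤ n) (K Kt : Matrix (Fin n) (Fin n) ℝ)
    (hK : ∀ i j, 0 ≤ K i j) (hKt : ∀ i j, 0 ≤ Kt i j) :
    List.TFAE [
      ∀ η : Fin n → ℝ, (∀ i, 0 ≤ η i) → eRad K η = eRad Kt η,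
      ∀ η : Fin n → ℝ, (∀ i, η i = 0 ∨ η i = 1) → eRad K η = eRad Kt η,
      ∀ η : Fin n → ℝ, (∀ i, 0 ≤ η i) → espec K η = espec Kt η,
      ∀ η : Fin n → ℝ, (∀ i, η i = 0 ∨ η i = 1) → espec K η = espec Kt η,
      ∀ α : Finset (Fin n), α.Nonempty → pminor K α = pminor Kt α] := by
  have hrad : ∀ (L : Matrix (Fin n) (Fin n) ℝ) (η : Fin n → ℝ),
      eRad L η = sSup ((fun z : ℂ => ‖z‖) '' espec L η) := fun _ _ => rfl
  tfae_have 3 → 1 := by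
    intro h η hη
    rw [hrad, hrad, h η hη]
  tfae_have 1 → 2 := by
    intro h η hη
    exact h η fun i => by rcases hη i with h' | h' <;> simp [h']
  tfae_have 3 → 4 := by
    intro h η hη
    exact h η fun i => by rcases hη i with h' | h' <;> simp [h']
  tfae_have 4 → 2 := by
    intro h η hη
    rw [hrad, hrad, h η hη]
  tfae_have 2 → 5 := by
    intro h
    exact minors_eq_of_eRad K Kt hK hKt h
  tfae_have 5 → 3 := by
    intro h η _
    exact espec_eq_of_minors h η
  tfae_finish
end Gelfand
end

section
/- Let γ > 0, let β = √(1+γ²) − 1, and let K = [[1,β],[β,1]] and K̃ = [[1,−γ],[γ,1]] be 2×2 real matrices. Then: the eigenvalues of K are √(1+γ²) and 2 − √(1+γ²); the eigenvalues of K̃ are 1 + γi and 1 − γi; R_e[K](η) = R_e[K̃](η) for all η ∈ {0,1}²; but there exists η ∈ ℝ₊² with R_e[K](η) ≠ R_e[K̃](η). -/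
open Matrix

lemma spec2 (M : Matrix (Fin 2) (Fin 2) ℂ) (r₁ r₂ : ℂ)
    (h₁ : M 0 0 + M 1 1 = r₁ + r₂)
    (h₂ : M 0 0 * M 1 1 - M 0 1 * M 1 0 = r₁ * r₂) :
    spectrum ℂ M = {r₁, r₂} := by
  ext z
  rw [spectrum.mem_iff, Matrix.isUnit_iff_isUnit_det]
  rw [Matrix.det_fin_two]
  simp only [Matrix.sub_apply, Matrix.algebraMap_matrix_apply, if_pos rfl, if_true,
    Algebra.algebraMap_self, RingHom.id_apply]
  rw [if_neg (by simp : ¬((0:Fin 2) = 1)), if_neg (by simp : ¬((1:Fin 2) = 0))]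
  rw [isUnit_iff_ne_zero, not_not]
  have key : (z - M 0 0) * (z - M 1 1) - (0 - M 0 1) * (0 - M 1 0)
      = (z - r₁) * (z - r₂) := by linear_combination (-z) * h₁ + h₂
  rw [key, mul_eq_zero, sub_eq_zero, sub_eq_zero]
  simp [Set.mem_insert_iff]

lemma entry2 (K : Matrix (Fin 2) (Fin 2) ℝ) (η : Fin 2 → ℝ) (i j : Fin 2) :
    ((K * Matrix.diagonal η).map (Complex.ofReal : ℝ → ℂ)) i j
      = ((K i j * η j : ℝ) : ℂ) := by
  simp [Matrix.map_apply, Matrix.mul_diagonal]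

lemma specRad_pair (M : Matrix (Fin 2) (Fin 2) ℝ) (r₁ r₂ : ℂ)
    (h : spectrum ℂ (M.map (Complex.ofReal : ℝ → ℂ)) = {r₁, r₂}) :
    specRad M = max ‖r₁‖ ‖r₂‖ := by
  unfold specRad
  rw [h, Set.image_insert_eq, Set.image_singleton, csSup_pair]

lemma eRad_pair (K : Matrix (Fin 2) (Fin 2) ℝ) (η : Fin 2 → ℝ) (r₁ r₂ : ℂ)
    (h₁ : ((K 0 0 * η 0 + K 1 1 * η 1 : ℝ) : ℂ) = r₁ + r₂)
    (h₂ : ((K 0 0 * η 0 * (K 1 1 * η 1) - K 0 1 * η 1 * (K 1 0 * η 0) : ℝ) : ℂ)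
        = r₁ * r₂) :
    eRad K η = max ‖r₁‖ ‖r₂‖ := by
  unfold eRad
  refine specRad_pair _ r₁ r₂ (spec2 _ r₁ r₂ ?_ ?_)
  · rw [entry2, entry2, ← h₁]; push_cast; ring
  · rw [entry2, entry2, entry2, entry2, ← h₂]; push_cast; ring

theorem same_eRad_on_boolean_but_not_everywhere
    (γ : ℝ) (hγ : 0 < γ) (β : ℝ) (hβ : β = Real.sqrt (1 + γ ^ 2) - 1) :
    spectrum ℂ ((!![(1 : ℝ), β; β, 1]).map (Complex.ofReal : ℝ → ℂ)) =
        {(Real.sqrt (1 + γ ^ 2) : ℂ), ((2 - Real.sqrt (1 + γ ^ 2) : ℝ) : ℂ)} ∧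
      spectrum ℂ ((!![(1 : ℝ), -γ; γ, 1]).map (Complex.ofReal : ℝ → ℂ)) =
        {1 + γ * Complex.I, 1 - γ * Complex.I} ∧
      (∀ η : Fin 2 → ℝ, (∀ i, η i = 0 ∨ η i = 1) →
        eRad !![(1 : ℝ), β; β, 1] η = eRad !![(1 : ℝ), -γ; γ, 1] η) ∧
      (∃ η : Fin 2 → ℝ, (∀ i, 0 ≤ η i) ∧
        eRad !![(1 : ℝ), β; β, 1] η ≠ eRad !![(1 : ℝ), -γ; γ, 1] η) := by
  subst hβ
  set s := Real.sqrt (1 + γ ^ 2) with hs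
  have hγ2 : (0:ℝ) ≤ 1 + γ ^ 2 := by positivity
  have hs2 : s ^ 2 = 1 + γ ^ 2 := Real.sq_sqrt hγ2
  have hs1 : 1 < s := by
    have h := Real.sqrt_lt_sqrt (by norm_num) (show (1:ℝ) < 1 + γ ^ 2 by nlinarith)
    simpa [hs] using h
  have hs0 : 0 ≤ s := by linarith
  -- abs facts for part 2 eigenvalues
  have hA : ‖(1 + (γ:ℂ) * Complex.I)‖ = s := by
    rw [show (1 + (γ:ℂ) * Complex.I) = ((1:ℝ):ℂ) + (γ:ℝ) * Complex.I by try push_cast; try ring,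
      Complex.norm_add_mul_I, hs]
    norm_num
  have hB : ‖(1 - (γ:ℂ) * Complex.I)‖ = s := by
    rw [show (1 - (γ:ℂ) * Complex.I) = ((1:ℝ):ℂ) + ((-γ):ℝ) * Complex.I by try push_cast; try ring,
      Complex.norm_add_mul_I, hs]
    norm_num
  refine ⟨?_, ?_, ?_, ?_⟩
  · apply spec2
    · simp [Matrix.map_apply]; try push_cast; try ring
    · simp [Matrix.map_apply]; try push_cast; try ring
  · apply spec2
    · simp [Matrix.map_apply]; try push_cast; try ring
    · simp [Matrix.map_apply]; push_cast
      linear_combination (γ:ℂ) ^ 2 * Complex.I_sq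
  · intro η hη
    rcases hη 0 with h0 | h0 <;> rcases hη 1 with h1 | h1
    · rw [eRad_pair _ η 0 0 (by simp [h0, h1]) (by simp [h0, h1]),
        eRad_pair _ η 0 0 (by simp [h0, h1]) (by simp [h0, h1])]
    · rw [eRad_pair _ η 1 0 (by simp [h0, h1]) (by simp [h0, h1]),
        eRad_pair _ η 1 0 (by simp [h0, h1]) (by simp [h0, h1])]
    · rw [eRad_pair _ η 1 0 (by simp [h0, h1]) (by simp [h0, h1]),
        eRad_pair _ η 1 0 (by simp [h0, h1]) (by simp [h0, h1])]
    · rw [eRad_pair _ η (s:ℂ) ((2 - s : ℝ) : ℂ)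
          (by simp [h0, h1]; try push_cast; try ring)
          (by simp [h0, h1]; try push_cast; try ring),
        eRad_pair _ η (1 + (γ:ℂ) * Complex.I) (1 - (γ:ℂ) * Complex.I)
          (by simp [h0, h1]; try push_cast; try ring)
          (by simp [h0, h1]; push_cast; linear_combination (γ:ℂ) ^ 2 * Complex.I_sq)]
      rw [hA, hB, max_self, Complex.norm_real, Complex.norm_real,
        Real.norm_eq_abs, Real.norm_eq_abs, abs_of_nonneg hs0]
      rw [max_eq_left (by rw [abs_le]; constructor <;> linarith)]
  · set a := (2 * γ + 2) ^ 2 with ha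
    have ha0 : 0 < a := by rw [ha]; positivity
    have hDnn : 0 ≤ (a - 1) ^ 2 + 4 * a * (s - 1) ^ 2 := by
      have := mul_nonneg (by linarith : (0:ℝ) ≤ 4 * a) (sq_nonneg (s - 1))
      nlinarith [sq_nonneg (a - 1)]
    have hD'eq : (a - 1) ^ 2 - 4 * a * γ ^ 2 = (4 * γ + 3) * (8 * γ ^ 2 + 12 * γ + 3) := by
      rw [ha]; ring
    have hD'nn : 0 ≤ (a - 1) ^ 2 - 4 * a * γ ^ 2 := by
      rw [hD'eq]; positivity
    set c := Real.sqrt ((a - 1) ^ 2 + 4 * a * (s - 1) ^ 2) with hc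
    set c' := Real.sqrt ((a - 1) ^ 2 - 4 * a * γ ^ 2) with hc'
    have hc2 : c ^ 2 = (a - 1) ^ 2 + 4 * a * (s - 1) ^ 2 := Real.sq_sqrt hDnn
    have hc'2 : c' ^ 2 = (a - 1) ^ 2 - 4 * a * γ ^ 2 := Real.sq_sqrt hD'nn
    have hc0 : 0 ≤ c := Real.sqrt_nonneg _
    have hc'0 : 0 ≤ c' := Real.sqrt_nonneg _
    have hlt : c' < c := by
      rw [hc, hc']
      apply Real.sqrt_lt_sqrt hD'nn
      nlinarith [mul_nonneg (by linarith : (0:ℝ) ≤ 4 * a) (sq_nonneg (s - 1)),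
        mul_pos (by linarith : (0:ℝ) < 4 * a) (mul_pos hγ hγ)]
    refine ⟨![a, 1], ?_, ?_⟩
    · intro i; fin_cases i
      · simpa using ha0.le
      · norm_num
    · rw [eRad_pair _ _ (((a + 1 + c) / 2 : ℝ) : ℂ) (((a + 1 - c) / 2 : ℝ) : ℂ)
          (by simp; try push_cast; try ring)
          (by
            have hc2C : (c:ℂ)^2 = ((a:ℂ) - 1)^2 + 4*(a:ℂ)*((s:ℂ) - 1)^2 := by
              exact_mod_cast congrArg (Complex.ofReal) hc2
            simp
            push_cast
            linear_combination ((1:ℂ)/4) * hc2C),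
        eRad_pair _ _ (((a + 1 + c') / 2 : ℝ) : ℂ) (((a + 1 - c') / 2 : ℝ) : ℂ)
          (by simp; try push_cast; try ring)
          (by
            have hc'2C : (c':ℂ)^2 = ((a:ℂ) - 1)^2 - 4*(a:ℂ)*(γ:ℂ)^2 := by
              exact_mod_cast congrArg (Complex.ofReal) hc'2
            simp
            push_cast
            linear_combination ((1:ℂ)/4) * hc'2C)]
      rw [Complex.norm_real, Complex.norm_real, Complex.norm_real, Complex.norm_real,
        Real.norm_eq_abs, Real.norm_eq_abs, Real.norm_eq_abs, Real.norm_eq_abs,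
        abs_of_nonneg (by linarith : (0:ℝ) ≤ (a + 1 + c) / 2),
        abs_of_nonneg (by linarith : (0:ℝ) ≤ (a + 1 + c') / 2),
        max_eq_left (by rw [abs_le]; constructor <;> linarith),
        max_eq_left (by rw [abs_le]; constructor <;> linarith)]
      intro h
      have : c = c' := by linarith
      linarith
end

section
/- Let K be an n×n matrix with nonnegative real entries. Then spec[K](η) = spec[K^𝒜](η) for all η ∈ ℝ₊ⁿ, where K^𝒜 is the matrix with entries K^𝒜_{ij} = K_{ij} if i and j both belong to some common maximal irreducible subset of {1,…,n} for K, and K^𝒜_{ij} = 0 otherwise. -/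
open Matrix

/-- `α` is a (nonempty) irreducible set of indices for `K`: the principal
submatrix `K[α]` is irreducible, i.e. `K[β, α \ β] ≠ 0` for every `β ⊆ α`
with `β` and `α \ β` nonempty. -/
def IsIrredSet {n : ℕ} (K : Matrix (Fin n) (Fin n) ℝ) (α : Finset (Fin n)) : Prop :=
  α.Nonempty ∧
    ∀ β ⊆ α, β.Nonempty → (α \ β).Nonempty → ∃ i ∈ β, ∃ j ∈ α \ β, K i j ≠ 0

/-- `α` is a maximal (for inclusion) irreducible set of indices for `K`. -/
def IsMaxIrredSet {n : ℕ} (K : Matrix (Fin n) (Fin n) ℝ) (α : Finset (Fin n)) : Prop :=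
  IsIrredSet K α ∧ ∀ β : Finset (Fin n), IsIrredSet K β → α ⊆ β → α = β

-- The matrix `K^𝒜`: entries of `K` on the maximal irreducible sets, `0` elsewhere.
open Classical in
noncomputable def matA {n : ℕ} (K : Matrix (Fin n) (Fin n) ℝ) :
    Matrix (Fin n) (Fin n) ℝ := fun i j =>
  if ∃ α : Finset (Fin n), IsMaxIrredSet K α ∧ i ∈ α ∧ j ∈ α then K i j else 0

/-- Every irreducible set is contained in a maximal one. -/
lemma exists_max_superset {n : ℕ} (K : Matrix (Fin n) (Fin n) ℝ)
    {α : Finset (Fin n)} (h : IsIrredSet K α) :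
    ∃ β, IsMaxIrredSet K β ∧ α ⊆ β := by
  classical
  set s : Finset (Finset (Fin n)) :=
    Finset.univ.filter (fun β => IsIrredSet K β ∧ α ⊆ β) with hs
  have hαs : α ∈ s := by simp [hs, h]
  obtain ⟨β, hβ, hmax⟩ := s.exists_max_image (fun β => β.card) ⟨α, hαs⟩
  simp only [hs, Finset.mem_filter, Finset.mem_univ, true_and] at hβ hmax
  refine ⟨β, ⟨hβ.1, ?_⟩, hβ.2⟩
  intro γ hγ hβγ
  have hγs : IsIrredSet K γ ∧ α ⊆ γ := ⟨hγ, hβ.2.trans hβγ⟩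
  exact Finset.eq_of_subset_of_card_le hβγ (hmax γ hγs)

lemma irred_singleton {n : ℕ} (K : Matrix (Fin n) (Fin n) ℝ) (i : Fin n) :
    IsIrredSet K {i} := by
  refine ⟨Finset.singleton_nonempty i, fun β hβ hne hne' => absurd hne' ?_⟩
  rw [Finset.subset_singleton_iff] at hβ
  rcases hβ with rfl | rfl
  · exact absurd hne (by simp)
  · simp

lemma matA_diag {n : ℕ} (K : Matrix (Fin n) (Fin n) ℝ) (i : Fin n) :
    matA K i i = K i i := by
  classical
  obtain ⟨β, hβ, hsub⟩ := exists_max_superset K (irred_singleton K i)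
  have : i ∈ β := hsub (Finset.mem_singleton_self i)
  simp only [matA]
  rw [if_pos ⟨β, hβ, this, this⟩]

lemma matA_eq_or_zero {n : ℕ} (K : Matrix (Fin n) (Fin n) ℝ) (i j : Fin n) :
    matA K i j = K i j ∨ matA K i j = 0 := by
  classical
  simp only [matA]
  split <;> simp

/-- fixed points are alone in their cycles -/
lemma sameCycle_not_fixed {n : ℕ} (σ : Equiv.Perm (Fin n)) {i j : Fin n}
    (h : σ.SameCycle i j) (hi : σ i ≠ i) : σ j ≠ j := by
  intro hj
  obtain ⟨m, _, hm⟩ := h.symm.exists_pow_eq'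
  have : ∀ k : ℕ, (σ ^ k) j = j := by
    intro k; induction k with
    | zero => rfl
    | succ k ih => rw [pow_succ', Equiv.Perm.mul_apply, ih, hj]
  rw [this m] at hm
  subst hm; exact hi hj

/-- The key combinatorial lemma: if all the off-diagonal entries `K (σ j) j`
along nonfixed points of `σ` are nonzero, then the cycle of any nonfixed point
lies in a maximal irreducible set, so `matA` agrees with `K` there. -/
lemma matA_orbit {n : ℕ} (K : Matrix (Fin n) (Fin n) ℝ) (σ : Equiv.Perm (Fin n))
    (i : Fin n) (hi : σ i ≠ i) (h : ∀ j, σ j ≠ j → K (σ j) j ≠ 0) :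
    matA K (σ i) i = K (σ i) i := by
  classical
  set α : Finset (Fin n) := Finset.univ.filter (fun j => σ.SameCycle i j) with hα
  have hmem : ∀ j, j ∈ α ↔ σ.SameCycle i j := by
    intro j; simp [hα]
  have hiα : i ∈ α := (hmem i).2 (Equiv.Perm.SameCycle.refl σ i)
  have hσiα : σ i ∈ α := (hmem (σ i)).2 ((Equiv.Perm.sameCycle_apply_right).2
    (Equiv.Perm.SameCycle.refl σ i))
  have hclosed : ∀ j ∈ α, σ j ∈ α := by
    intro j hj
    exact (hmem (σ j)).2 ((Equiv.Perm.sameCycle_apply_right).2 ((hmem j).1 hj))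
  have hnonfix : ∀ j ∈ α, σ j ≠ j := fun j hj =>
    sameCycle_not_fixed σ ((hmem j).1 hj) hi
  have hirr : IsIrredSet K α := by
    refine ⟨⟨i, hiα⟩, fun β hβα hβ hβ' => ?_⟩
    -- find j ∈ α \ β with σ j ∈ β
    by_contra hcon
    push_neg at hcon
    -- then σ maps α \ β into itself
    have hmaps : ∀ j ∈ α \ β, σ j ∈ α \ β := by
      intro j hj
      have hjα : j ∈ α := (Finset.mem_sdiff.1 hj).1
      have h1 : σ j ∈ α := hclosed j hjα
      by_contra hcc
      have : σ j ∈ β := by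
        by_contra h2
        exact hcc (Finset.mem_sdiff.2 ⟨h1, h2⟩)
      exact h j (hnonfix j hjα) (hcon (σ j) this j hj)
    -- hence (α \ β) is stable under σ, hence under all powers of σ
    have hpow : ∀ (k : ℕ) (j), j ∈ α \ β → (σ ^ k) j ∈ α \ β := by
      intro k
      induction k with
      | zero => intro j hj; simpa using hj
      | succ k ih =>
        intro j hj
        rw [pow_succ', Equiv.Perm.mul_apply]
        exact hmaps _ (ih j hj)
    obtain ⟨b, hb⟩ := hβ
    obtain ⟨c, hc⟩ := hβ'
    have hbα : b ∈ α := hβα hb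
    have hcycle : σ.SameCycle c b :=
      ((hmem c).1 (Finset.mem_sdiff.1 hc).1).symm.trans ((hmem b).1 hbα)
    obtain ⟨m, _, hm⟩ := hcycle.exists_pow_eq'
    have : b ∈ α \ β := hm ▸ hpow m c hc
    exact (Finset.mem_sdiff.1 this).2 hb
  obtain ⟨β, hβ, hsub⟩ := exists_max_superset K hirr
  simp only [matA]
  rw [if_pos ⟨β, hβ, hsub hσiα, hsub hiα⟩]

theorem espec_matA {n : ℕ} (K : Matrix (Fin n) (Fin n) ℝ)
    (hK : ∀ i j, 0 ≤ K i j) :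
    ∀ η : Fin n → ℝ, (∀ i, 0 ≤ η i) → espec K η = espec (matA K) η := by
  intro η hη
  classical
  unfold espec
  set M₁ : Matrix (Fin n) (Fin n) ℂ := (K * Matrix.diagonal η).map (Complex.ofReal) with hM₁
  set M₂ : Matrix (Fin n) (Fin n) ℂ := (matA K * Matrix.diagonal η).map (Complex.ofReal) with hM₂
  have hentry₁ : ∀ i j, M₁ i j = ((K i j * η j : ℝ) : ℂ) := by
    intro i j; simp [hM₁, Matrix.mul_diagonal]
  have hentry₂ : ∀ i j, M₂ i j = ((matA K i j * η j : ℝ) : ℂ) := by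
    intro i j; simp [hM₂, Matrix.mul_diagonal]
  have hdet : ∀ μ : ℂ,
      (algebraMap ℂ (Matrix (Fin n) (Fin n) ℂ) μ - M₁).det =
      (algebraMap ℂ (Matrix (Fin n) (Fin n) ℂ) μ - M₂).det := by
    intro μ
    rw [Matrix.det_apply, Matrix.det_apply]
    refine Finset.sum_congr rfl fun σ _ => ?_
    congr 1
    by_cases hz : ∀ i, σ i ≠ i → K (σ i) i * η i ≠ 0
    · refine Finset.prod_congr rfl fun i _ => ?_
      by_cases hfix : σ i = i
      · rw [hfix]
        simp only [Matrix.sub_apply, hentry₁, hentry₂, matA_diag]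
      · have := matA_orbit K σ i hfix (fun j hj => fun hc => hz j hj (by rw [hc]; ring))
        simp only [Matrix.sub_apply, hentry₁, hentry₂, this]
    · push_neg at hz
      obtain ⟨i, hfix, hz⟩ := hz
      have hzero₂ : matA K (σ i) i * η i = 0 := by
        rcases matA_eq_or_zero K (σ i) i with h | h
        · rw [h]; exact hz
        · rw [h]; ring
      have hdiagzero : (algebraMap ℂ (Matrix (Fin n) (Fin n) ℂ) μ) (σ i) i = 0 := by
        rw [Matrix.algebraMap_matrix_apply, if_neg hfix]
      rw [Finset.prod_eq_zero (Finset.mem_univ i), Finset.prod_eq_zero (Finset.mem_univ i)]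
      · rw [Matrix.sub_apply, hdiagzero, hentry₂, hzero₂]; simp
      · rw [Matrix.sub_apply, hdiagzero, hentry₁, hz]; simp
  ext μ
  rw [spectrum.mem_iff, spectrum.mem_iff, Matrix.isUnit_iff_isUnit_det,
    Matrix.isUnit_iff_isUnit_det, hdet μ]
end

section
/- Let n = m + p with m, p ≥ 1, let A be an m×m real matrix, B a p×p real matrix, v, w ∈ ℝᵐ, and b, c ∈ ℝᵖ. Let K be the n×n block matrix [[A, v·bᵀ],[c·wᵀ, B]] and let K̃ be the n×n block matrix [[Aᵀ, w·bᵀ],[c·vᵀ, B]]. Then det(K − λI) = det(K̃ − λI) for every λ ∈ ℂ; in particular K and K̃ have the same characteristic polynomial and the same spectrum. -/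
open Matrix Polynomial

section aux
variable {m p : ℕ}

private lemma vvv (c : Fin p → ℂ) (w : Fin m → ℂ) (M : Matrix (Fin m) (Fin m) ℂ)
    (v : Fin m → ℂ) (b : Fin p → ℂ) :
    Matrix.vecMulVec c w * M * Matrix.vecMulVec v b
      = (w ⬝ᵥ M *ᵥ v) • Matrix.vecMulVec c b := by
  ext i j
  simp only [mul_apply, vecMulVec_apply, Matrix.smul_apply, smul_eq_mul, dotProduct, mulVec,
    Finset.sum_mul, Finset.mul_sum]
  rw [Finset.sum_comm]
  apply Finset.sum_congr rfl; intro k _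
  apply Finset.sum_congr rfl; intro l _
  ring

private lemma eval_charpoly' {n : Type*} [Fintype n] [DecidableEq n] (M : Matrix n n ℂ)
    (lam : ℂ) : M.charpoly.eval lam = (lam • (1 : Matrix n n ℂ) - M).det := by
  rw [Matrix.charpoly, _root_.eval_det, matPolyEquiv_charmatrix]
  simp [smul_eq_diagonal_mul]

private lemma schur (A : Matrix (Fin m) (Fin m) ℂ) (B : Matrix (Fin p) (Fin p) ℂ)
    (v w : Fin m → ℂ) (b c : Fin p → ℂ) (lam : ℂ)
    (h : IsUnit (A - lam • 1).det) :
    (Matrix.fromBlocks A (Matrix.vecMulVec v b) (Matrix.vecMulVec c w) B - lam • 1).det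
      = (A - lam • 1).det *
        (B - lam • 1 - (w ⬝ᵥ (A - lam • 1)⁻¹ *ᵥ v) • Matrix.vecMulVec c b).det := by
  have hblock : Matrix.fromBlocks A (Matrix.vecMulVec v b) (Matrix.vecMulVec c w) B - lam • 1
      = Matrix.fromBlocks (A - lam • 1) (Matrix.vecMulVec v b) (Matrix.vecMulVec c w)
          (B - lam • 1) := by
    ext i j
    rcases i with i | i <;> rcases j with j | j <;>
      simp [one_apply, Matrix.smul_apply, Matrix.sub_apply]
  have hinv : Invertible (A - lam • 1) := (A - lam • 1).invertibleOfIsUnitDet h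
  rw [hblock, det_fromBlocks₁₁, invOf_eq_nonsing_inv, vvv]

/-- Determinant equality at good `lam`. -/
private lemma det_eq_of_unit (A : Matrix (Fin m) (Fin m) ℂ) (B : Matrix (Fin p) (Fin p) ℂ)
    (v w : Fin m → ℂ) (b c : Fin p → ℂ) (lam : ℂ)
    (h : IsUnit (A - lam • 1).det) :
    (Matrix.fromBlocks A (Matrix.vecMulVec v b) (Matrix.vecMulVec c w) B - lam • 1).det
      = (Matrix.fromBlocks Aᵀ (Matrix.vecMulVec w b) (Matrix.vecMulVec c v) B - lam • 1).det := by
  have hT : Aᵀ - lam • 1 = (A - lam • 1)ᵀ := by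
    rw [transpose_sub, transpose_smul, transpose_one]
  have h' : IsUnit (Aᵀ - lam • 1).det := by
    rw [hT, det_transpose]; exact h
  rw [schur A B v w b c lam h, schur Aᵀ B w v b c lam h']
  have hs : v ⬝ᵥ (Aᵀ - lam • 1)⁻¹ *ᵥ w = w ⬝ᵥ (A - lam • 1)⁻¹ *ᵥ v := by
    rw [hT, ← transpose_nonsing_inv, dotProduct_mulVec, vecMul_transpose, dotProduct_comm]
  rw [hs, hT, det_transpose]

end aux

theorem charpoly_partial_transpose {m p : ℕ} (hm : 1 ≤ m) (hp : 1 ≤ p)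
    (A : Matrix (Fin m) (Fin m) ℝ) (B : Matrix (Fin p) (Fin p) ℝ)
    (v w : Fin m → ℝ) (b c : Fin p → ℝ) :
    (∀ lam : ℂ,
      ((Matrix.fromBlocks A (Matrix.vecMulVec v b) (Matrix.vecMulVec c w) B).map
          (Complex.ofReal : ℝ → ℂ) - lam • 1).det =
        ((Matrix.fromBlocks Aᵀ (Matrix.vecMulVec w b) (Matrix.vecMulVec c v) B).map
          (Complex.ofReal : ℝ → ℂ) - lam • 1).det) ∧
    ((Matrix.fromBlocks A (Matrix.vecMulVec v b) (Matrix.vecMulVec c w) B).map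
        (Complex.ofReal : ℝ → ℂ)).charpoly =
      ((Matrix.fromBlocks Aᵀ (Matrix.vecMulVec w b) (Matrix.vecMulVec c v) B).map
        (Complex.ofReal : ℝ → ℂ)).charpoly ∧
    spectrum ℂ ((Matrix.fromBlocks A (Matrix.vecMulVec v b) (Matrix.vecMulVec c w) B).map
        (Complex.ofReal : ℝ → ℂ)) =
      spectrum ℂ ((Matrix.fromBlocks Aᵀ (Matrix.vecMulVec w b) (Matrix.vecMulVec c v) B).map
        (Complex.ofReal : ℝ → ℂ)) := by
  set f : ℝ → ℂ := Complex.ofReal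
  set A' : Matrix (Fin m) (Fin m) ℂ := A.map f with hA'
  set B' : Matrix (Fin p) (Fin p) ℂ := B.map f with hB'
  set v' : Fin m → ℂ := fun i => f (v i)
  set w' : Fin m → ℂ := fun i => f (w i)
  set b' : Fin p → ℂ := fun i => f (b i)
  set c' : Fin p → ℂ := fun i => f (c i)
  have hK1 : (Matrix.fromBlocks A (Matrix.vecMulVec v b) (Matrix.vecMulVec c w) B).map f
      = Matrix.fromBlocks A' (Matrix.vecMulVec v' b') (Matrix.vecMulVec c' w') B' := by
    ext i j
    rcases i with i | i <;> rcases j with j | j <;>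
      simp [vecMulVec_apply, hA', hB', Matrix.map_apply, v', w', b', c', f, Complex.ofReal_mul]
  have hK2 : (Matrix.fromBlocks Aᵀ (Matrix.vecMulVec w b) (Matrix.vecMulVec c v) B).map f
      = Matrix.fromBlocks A'ᵀ (Matrix.vecMulVec w' b') (Matrix.vecMulVec c' v') B' := by
    ext i j
    rcases i with i | i <;> rcases j with j | j <;>
      simp [vecMulVec_apply, hA', hB', Matrix.map_apply, v', w', b', c', f, Complex.ofReal_mul]
  set K1 : Matrix (Fin m ⊕ Fin p) (Fin m ⊕ Fin p) ℂ :=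
    Matrix.fromBlocks A' (Matrix.vecMulVec v' b') (Matrix.vecMulVec c' w') B' with hK1'
  set K2 : Matrix (Fin m ⊕ Fin p) (Fin m ⊕ Fin p) ℂ :=
    Matrix.fromBlocks A'ᵀ (Matrix.vecMulVec w' b') (Matrix.vecMulVec c' v') B' with hK2'
  -- the set of bad lam is finite
  have hbadfin : {lam : ℂ | ¬ IsUnit (A' - lam • 1).det}.Finite := by
    have hsub : {lam : ℂ | ¬ IsUnit (A' - lam • 1).det}
        ⊆ {lam : ℂ | A'.charpoly.IsRoot lam} := by
      intro lam hlam
      simp only [Set.mem_setOf_eq, isUnit_iff_ne_zero, not_not] at hlam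
      have hms : lam • (1 : Matrix (Fin m) (Fin m) ℂ) - A' = -(A' - lam • 1) := (neg_sub _ _).symm
      show A'.charpoly.IsRoot lam
      rw [IsRoot, eval_charpoly', hms, det_neg, hlam, mul_zero]
    exact Set.Finite.subset (Polynomial.finite_setOf_isRoot A'.charpoly_monic.ne_zero) hsub
  have hgood : {lam : ℂ | IsUnit (A' - lam • 1).det}.Infinite := by
    have := Set.infinite_univ (α := ℂ)
    have : {lam : ℂ | IsUnit (A' - lam • 1).det}
        = {lam : ℂ | ¬ IsUnit (A' - lam • 1).det}ᶜ := by
      ext lam; simp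
    rw [this]
    exact hbadfin.infinite_compl
  -- charpoly equality
  have hcp : K1.charpoly = K2.charpoly := by
    apply Polynomial.eq_of_infinite_eval_eq
    apply Set.Infinite.mono _ hgood
    intro lam hlam
    simp only [Set.mem_setOf_eq] at hlam ⊢
    rw [eval_charpoly', eval_charpoly']
    have h1 : lam • (1 : Matrix (Fin m ⊕ Fin p) (Fin m ⊕ Fin p) ℂ) - K1
        = -(K1 - lam • 1) := (neg_sub _ _).symm
    have h2 : lam • (1 : Matrix (Fin m ⊕ Fin p) (Fin m ⊕ Fin p) ℂ) - K2
        = -(K2 - lam • 1) := (neg_sub _ _).symm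
    rw [h1, h2, det_neg, det_neg, det_eq_of_unit A' B' v' w' b' c' lam hlam]
  -- det equality for all lam
  have hdet : ∀ lam : ℂ, (K1 - lam • 1).det = (K2 - lam • 1).det := by
    intro lam
    have h1 : K1 - lam • 1 = -(lam • 1 - K1) := (neg_sub _ _).symm
    have h2 : K2 - lam • 1 = -(lam • 1 - K2) := (neg_sub _ _).symm
    rw [h1, h2, det_neg, det_neg, ← eval_charpoly', ← eval_charpoly', hcp]
  refine ⟨?_, ?_, ?_⟩
  · intro lam; rw [hK1, hK2]; exact hdet lam
  · rw [hK1, hK2]; exact hcp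
  · rw [hK1, hK2]
    ext lam
    rw [spectrum.mem_iff, spectrum.mem_iff, not_iff_not,
        Matrix.isUnit_iff_isUnit_det, Matrix.isUnit_iff_isUnit_det]
    have halg : ∀ M : Matrix (Fin m ⊕ Fin p) (Fin m ⊕ Fin p) ℂ,
        ((algebraMap ℂ (Matrix (Fin m ⊕ Fin p) (Fin m ⊕ Fin p) ℂ)) lam - M)
          = -(M - lam • 1) := by
      intro M; rw [Algebra.algebraMap_eq_smul_one, neg_sub]
    rw [halg, halg, det_neg, det_neg, hdet lam]
end
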